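/- Let W, W̃ ∈ ℂ^{n×n} and ε ∈ (0,1). (1) If W̃ is a min ε-approximation of W, then W̃ is a complex ε/(1 − ε/2)-approximation of W. (2) If W̃ is a complex ε-approximation of W, then W̃ is a min ε/(1 − ε)-approximation of W. -/

import Mathlib

open Matrix

noncomputable section

/-- The sesquilinear form `x* A y`. -/
def sesq {m : Type*} [Fintype m] (A : Matrix m m ℂ) (x y : m → ℂ) : ℂ :=
  star x ⬝ᵥ (A *ᵥ y)

/-- The squared Euclidean norm of a complex vector. -/
def vnormSq {m : Type*} [Fintype m] (x : m → ℂ) : ℝ :=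
  ∑ i, Complex.normSq (x i)

/-- The symmetrization `U_A = (A + A*)/2` of a complex square matrix. -/
def csym {m : Type*} [Fintype m] (A : Matrix m m ℂ) : Matrix m m ℂ :=
  (1 / 2 : ℂ) • (A + Aᴴ)

/-- `W̃` is a *complex ε-approximation* of `W`. -/
def ComplexApprox {m : Type*} [Fintype m] (ε : ℝ) (W Wt : Matrix m m ℂ) : Prop :=
  ∀ x y : m → ℂ,
    ‖sesq (W - Wt) x y‖ ≤
      ε / 2 * (vnormSq x + vnormSq y - (sesq W x x + sesq W y y).re)

/-- `W̃` is a *min ε-approximation* of `W`: for all `x, y`,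
`|x*(W − W̃)y| ≤ (ε/2)·min{x*U_{I−W}x + y*U_{I−W̃}y, y*U_{I−W}y + x*U_{I−W̃}x}`. -/
def MinApprox {m : Type*} [Fintype m] [DecidableEq m] (ε : ℝ) (W Wt : Matrix m m ℂ) : Prop :=
  ∀ x y : m → ℂ,
    ‖sesq (W - Wt) x y‖ ≤
      ε / 2 *
        min ((sesq (csym (1 - W)) x x).re + (sesq (csym (1 - Wt)) y y).re)
          ((sesq (csym (1 - W)) y y).re + (sesq (csym (1 - Wt)) x x).re)

lemma sesq_conjT {m : Type*} [Fintype m] (A : Matrix m m ℂ) (x : m → ℂ) :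
    sesq Aᴴ x x = star (sesq A x x) := by
  simp only [sesq, dotProduct, mulVec, Matrix.conjTranspose_apply, dotProduct, star_sum,
    star_mul', Pi.star_apply, Finset.mul_sum, Finset.sum_mul]
  rw [Finset.sum_comm]
  simp [mul_comm, mul_left_comm, mul_assoc]

lemma re_sesq_key {m : Type*} [Fintype m] [DecidableEq m] (A : Matrix m m ℂ) (x : m → ℂ) :
    (sesq (csym (1 - A)) x x).re = vnormSq x - (sesq A x x).re := by
  have h1 : sesq (csym (1 - A)) x x
      = (1/2 : ℂ) * (sesq (1 - A) x x + sesq (1 - A)ᴴ x x) := by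
    simp [sesq, csym, Matrix.add_mulVec, Matrix.smul_mulVec, dotProduct_add,
      dotProduct_smul, mul_add]
  have h2 : sesq (1 - A) x x = sesq (1 : Matrix m m ℂ) x x - sesq A x x := by
    simp [sesq, Matrix.sub_mulVec, dotProduct_sub]
  have h3 : (sesq (1 : Matrix m m ℂ) x x) = (vnormSq x : ℂ) := by
    simp [sesq, vnormSq, dotProduct, Complex.normSq_eq_conj_mul_self]
  rw [h1, sesq_conjT, h2, h3]
  simp [Complex.mul_re, Complex.add_re, Complex.sub_re]
  ring

/-- For `ε ∈ (0,1)`: (1) min ε-approximation implies complex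
`ε/(1 − ε/2)`-approximation; (2) complex ε-approximation implies min
`ε/(1 − ε)`-approximation. -/
theorem min_approx_vs_complex_approx {n : ℕ} (ε : ℝ) (h0 : 0 < ε) (h1 : ε < 1)
    (W Wt : Matrix (Fin n) (Fin n) ℂ) :
    (MinApprox ε W Wt → ComplexApprox (ε / (1 - ε / 2)) W Wt) ∧
    (ComplexApprox ε W Wt → MinApprox (ε / (1 - ε)) W Wt) := by
  set Q : (Fin n → ℂ) → ℝ := fun x => vnormSq x - (sesq W x x).re with hQ
  set Qt : (Fin n → ℂ) → ℝ := fun x => vnormSq x - (sesq Wt x x).re with hQt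
  clear_value Q Qt
  have hkeyW : ∀ x : Fin n → ℂ, (sesq (csym (1 - W)) x x).re = Q x := by
    intro x; simp only [hQ]; exact re_sesq_key W x
  have hkeyWt : ∀ x : Fin n → ℂ, (sesq (csym (1 - Wt)) x x).re = Qt x := by
    intro x; simp only [hQt]; exact re_sesq_key Wt x
  have hzero : ∀ x : Fin n → ℂ, sesq (W - Wt) x (0 : Fin n → ℂ) = 0 := by
    intro x; simp [sesq]
  have hzero' : ∀ x : Fin n → ℂ, sesq (W - Wt) (0 : Fin n → ℂ) x = 0 := by
    intro x; simp [sesq, dotProduct]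
  have hQ0 : Q 0 = 0 := by simp [hQ, vnormSq, sesq]
  have hQt0 : Qt 0 = 0 := by simp [hQt, vnormSq, sesq]
  have hdiff : ∀ x : Fin n → ℂ, Qt x = Q x + (sesq (W - Wt) x x).re := by
    intro x
    have : sesq (W - Wt) x x = sesq W x x - sesq Wt x x := by
      simp [sesq, Matrix.sub_mulVec, dotProduct_sub]
    simp only [hQ, hQt, this, Complex.sub_re]; ring
  have hre_le : ∀ x : Fin n → ℂ,
      |(sesq (W - Wt) x x).re| ≤ ‖sesq (W - Wt) x x‖ := fun x =>
    Complex.abs_re_le_norm _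
  have hrhs : ∀ x y : Fin n → ℂ,
      vnormSq x + vnormSq y - (sesq W x x + sesq W y y).re = Q x + Q y := by
    intro x y; simp [hQ, Complex.add_re]; ring
  have h2 : (0:ℝ) < 1 - ε / 2 := by linarith
  have h3 : (0:ℝ) < 1 - ε := by linarith
  constructor
  · -- Min → Complex
    intro h
    have hnn : ∀ z : Fin n → ℂ, 0 ≤ Q z ∧ 0 ≤ Qt z := by
      intro z
      have h1' := h z 0
      simp only [hkeyW, hkeyWt, hzero, hQ0, hQt0, add_zero, zero_add, norm_zero] at h1'
      have hm : 0 ≤ min (Q z) (Qt z) := by nlinarith [h1']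
      exact ⟨le_trans hm (min_le_left _ _), le_trans hm (min_le_right _ _)⟩
    have hd : ∀ z : Fin n → ℂ, (1 - ε / 2) * Qt z ≤ (1 + ε / 2) * Q z := by
      intro z
      have hzz := h z z
      simp only [hkeyW, hkeyWt, min_self] at hzz
      linarith [hzz, hdiff z, (abs_le.mp (hre_le z)).2]
    intro x y
    rw [hrhs x y]
    rw [show ε / (1 - ε / 2) / 2 * (Q x + Q y) = (ε / 2 * (Q x + Q y)) / (1 - ε / 2) by
      rw [div_right_comm, div_mul_eq_mul_div], le_div_iff₀ h2]
    have hxy := h x y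
    simp only [hkeyW, hkeyWt] at hxy
    set s := ‖sesq (W - Wt) x y‖ with hs
    set A := Q x + Qt y with hA
    set B := Q y + Qt x with hB
    have e1 : (1 - ε / 2) * s ≤ (1 - ε / 2) * (ε / 2 * min A B) :=
      mul_le_mul_of_nonneg_left hxy h2.le
    have cnn : (0:ℝ) ≤ ε / 4 * (1 - ε / 2) := by nlinarith
    have eA : ε / 4 * (1 - ε / 2) * min A B ≤ ε / 4 * (1 - ε / 2) * A :=
      mul_le_mul_of_nonneg_left (min_le_left _ _) cnn
    have eB : ε / 4 * (1 - ε / 2) * min A B ≤ ε / 4 * (1 - ε / 2) * B :=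
      mul_le_mul_of_nonneg_left (min_le_right _ _) cnn
    have eX : ε / 4 * ((1 - ε / 2) * Qt x) ≤ ε / 4 * ((1 + ε / 2) * Q x) :=
      mul_le_mul_of_nonneg_left (hd x) (by linarith)
    have eY : ε / 4 * ((1 - ε / 2) * Qt y) ≤ ε / 4 * ((1 + ε / 2) * Q y) :=
      mul_le_mul_of_nonneg_left (hd y) (by linarith)
    rw [hA, hB] at eA eB
    linarith [e1, eA, eB, eX, eY]
  · -- Complex → Min
    intro h
    have hC : ∀ x y : Fin n → ℂ,
        ‖sesq (W - Wt) x y‖ ≤ ε / 2 * (Q x + Q y) := by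
      intro x y
      have := h x y
      rwa [hrhs x y] at this
    have hnn : ∀ z : Fin n → ℂ, 0 ≤ Q z := by
      intro z
      have h1' := hC z 0
      rw [hzero z, hQ0, norm_zero, add_zero] at h1'
      nlinarith [h1']
    have hlow : ∀ z : Fin n → ℂ, (1 - ε) * Q z ≤ Qt z := by
      intro z
      have hzz := hC z z
      have := abs_le.mp (hre_le z)
      have := hdiff z
      nlinarith [(abs_le.mp (hre_le z)).1]
    intro x y
    simp only [hkeyW, hkeyWt]
    have key : ∀ u v : Fin n → ℂ,
        ‖sesq (W - Wt) x y‖ * (1 - ε) ≤ ε / 2 * (Q u + Qt v) →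
        ‖sesq (W - Wt) x y‖ ≤ ε / (1 - ε) / 2 * (Q u + Qt v) := by
      intro u v huv
      rw [show ε / (1 - ε) / 2 * (Q u + Qt v) = (ε / 2 * (Q u + Qt v)) / (1 - ε) by
        rw [div_right_comm, div_mul_eq_mul_div], le_div_iff₀ h3]
      exact huv
    have sxy := hC x y
    have snn : (0:ℝ) ≤ ‖sesq (W - Wt) x y‖ := norm_nonneg _
    rcases min_choice (Q x + Qt y) (Q y + Qt x) with hmc | hmc <;> rw [hmc]
    · refine key x y ?_
      have e1 : ‖sesq (W - Wt) x y‖ * (1 - ε) ≤ ε / 2 * (Q x + Q y) * (1 - ε) :=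
        mul_le_mul_of_nonneg_right sxy h3.le
      have e2 : ε / 2 * ((1 - ε) * Q y) ≤ ε / 2 * Qt y :=
        mul_le_mul_of_nonneg_left (hlow y) (by linarith)
      have e3 : (0:ℝ) ≤ ε * (ε * Q x) := mul_nonneg h0.le (mul_nonneg h0.le (hnn x))
      nlinarith [e1, e2, e3]
    · refine key y x ?_
      have e1 : ‖sesq (W - Wt) x y‖ * (1 - ε) ≤ ε / 2 * (Q x + Q y) * (1 - ε) :=
        mul_le_mul_of_nonneg_right sxy h3.le
      have e2 : ε / 2 * ((1 - ε) * Q x) ≤ ε / 2 * Qt x :=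
        mul_le_mul_of_nonneg_left (hlow x) (by linarith)
      have e3 : (0:ℝ) ≤ ε * (ε * Q y) := mul_nonneg h0.le (mul_nonneg h0.le (hnn y))
      nlinarith [e1, e2, e3]

end
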